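/- For an affine layer Z = W *_M U + B·1^T followed by an entrywise differentiable activation σ with output U' = σ(Z), and M a nonzero multiple of an orthogonal matrix, the gradient of a scalar loss E with respect to U satisfies δU = W^T *_M (σ'(Z) ⊙ δU'), where ⊙ is the Hadamard product, σ' is applied entrywise, and δU' is the gradient of E with respect to U'. -/

import Mathlib

open scoped BigOperators
open Matrix

noncomputable section

/-- Mode-3 product: apply matrix `M` to the tube fibers of `A`. -/
def mode3 {l p n q : ℕ} (A : Fin l → Fin p → Fin n → ℝ)
    (M : Matrix (Fin q) (Fin n) ℝ) : Fin l → Fin p → Fin q → ℝ :=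
  fun i j k => ∑ t, A i j t * M k t

/-- Facewise product: multiply corresponding frontal slices. -/
def face {l p m n : ℕ} (A : Fin l → Fin p → Fin n → ℝ)
    (B : Fin p → Fin m → Fin n → ℝ) : Fin l → Fin m → Fin n → ℝ :=
  fun i j k => ∑ t, A i t k * B t j k

/-- The `*_M` product: `A *_M B = ((A ×₃ M) △ (B ×₃ M)) ×₃ M⁻¹`. -/
def tprodM {l p m n : ℕ} (M : Matrix (Fin n) (Fin n) ℝ)
    (A : Fin l → Fin p → Fin n → ℝ) (B : Fin p → Fin m → Fin n → ℝ) :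
    Fin l → Fin m → Fin n → ℝ :=
  mode3 (face (mode3 A M) (mode3 B M)) M⁻¹

/-- Tensor transpose: transpose each frontal slice. -/
def ttrans {l p n : ℕ} (A : Fin l → Fin p → Fin n → ℝ) :
    Fin p → Fin l → Fin n → ℝ :=
  fun i j k => A j i k

lemma tprodM_apply {l p m n : ℕ} (M : Matrix (Fin n) (Fin n) ℝ)
    (A : Fin l → Fin p → Fin n → ℝ) (B : Fin p → Fin m → Fin n → ℝ)
    (i : Fin l) (j : Fin m) (k : Fin n) :
    tprodM M A B i j k = ∑ u, face (mode3 A M) (mode3 B M) i j u * M⁻¹ k u := rfl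

lemma face_apply {l p m n : ℕ} (A : Fin l → Fin p → Fin n → ℝ)
    (B : Fin p → Fin m → Fin n → ℝ) (i : Fin l) (j : Fin m) (k : Fin n) :
    face A B i j k = ∑ t, A i t k * B t j k := rfl

lemma sum_comm4 {α β γ δ : Type*} [Fintype α] [Fintype β] [Fintype γ] [Fintype δ]
    (f : α → β → γ → δ → ℝ) :
    ∑ i, ∑ j, ∑ u, ∑ t, f i j u t = ∑ t, ∑ j, ∑ u, ∑ i, f i j u t := by
  calc ∑ i, ∑ j, ∑ u, ∑ t, f i j u t
      = ∑ j, ∑ i, ∑ u, ∑ t, f i j u t := Finset.sum_comm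
    _ = ∑ j, ∑ u, ∑ i, ∑ t, f i j u t :=
        Finset.sum_congr rfl fun _ _ => Finset.sum_comm
    _ = ∑ j, ∑ u, ∑ t, ∑ i, f i j u t :=
        Finset.sum_congr rfl fun _ _ => Finset.sum_congr rfl fun _ _ => Finset.sum_comm
    _ = ∑ j, ∑ t, ∑ u, ∑ i, f i j u t :=
        Finset.sum_congr rfl fun _ _ => Finset.sum_comm
    _ = ∑ t, ∑ j, ∑ u, ∑ i, f i j u t := Finset.sum_comm

lemma adjointEq {m p q n : ℕ} (M : Matrix (Fin n) (Fin n) ℝ)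
    (c : ℝ) (hc : c ≠ 0) (hM : M * Mᵀ = c • (1 : Matrix (Fin n) (Fin n) ℝ))
    (A : Fin m → Fin p → Fin n → ℝ) (D : Fin m → Fin q → Fin n → ℝ)
    (H : Fin p → Fin q → Fin n → ℝ) :
    ∑ i, ∑ j, ∑ k, D i j k * tprodM M A H i j k
      = ∑ r, ∑ s, ∑ k, tprodM M (ttrans A) D r s k * H r s k := by
  have hinv : M⁻¹ = c⁻¹ • Mᵀ := by
    have h1 : M * (c⁻¹ • Mᵀ) = 1 := by
      rw [Matrix.mul_smul, hM, smul_smul, inv_mul_cancel₀ hc, one_smul]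
    exact inv_eq_right_inv h1
  set Ah := mode3 A M with hAh
  set Hh := mode3 H M with hHh
  set Dh := mode3 D M with hDh
  have hAt : mode3 (ttrans A) M = fun t i u => Ah i t u := by
    funext t i u; simp [mode3, ttrans, hAh]
  have step1 : ∀ i j, ∑ k, D i j k * tprodM M A H i j k
      = ∑ u, ∑ t, c⁻¹ * (Dh i j u * (Ah i t u * Hh t j u)) := by
    intro i j
    calc ∑ k, D i j k * tprodM M A H i j k
        = ∑ k, ∑ u, D i j k * (face Ah Hh i j u * (c⁻¹ * M u k)) := by
          refine Finset.sum_congr rfl fun k _ => ?_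
          rw [tprodM_apply, Finset.mul_sum]
          simp [hinv]
          rfl
      _ = ∑ u, ∑ k, D i j k * (face Ah Hh i j u * (c⁻¹ * M u k)) := Finset.sum_comm
      _ = ∑ u, c⁻¹ * (Dh i j u * face Ah Hh i j u) := by
          refine Finset.sum_congr rfl fun u _ => ?_
          rw [hDh]
          show ∑ k, D i j k * (face Ah Hh i j u * (c⁻¹ * M u k))
              = c⁻¹ * ((∑ k, D i j k * M u k) * face Ah Hh i j u)
          rw [Finset.sum_mul, Finset.mul_sum]
          exact Finset.sum_congr rfl fun k _ => by ring
      _ = ∑ u, ∑ t, c⁻¹ * (Dh i j u * (Ah i t u * Hh t j u)) := by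
          refine Finset.sum_congr rfl fun u _ => ?_
          rw [face_apply, Finset.mul_sum, Finset.mul_sum]
  have step2 : ∀ t j, ∑ k, tprodM M (ttrans A) D t j k * H t j k
      = ∑ u, ∑ i, c⁻¹ * (Ah i t u * Dh i j u * Hh t j u) := by
    intro t j
    calc ∑ k, tprodM M (ttrans A) D t j k * H t j k
        = ∑ k, ∑ u, face (mode3 (ttrans A) M) Dh t j u * (c⁻¹ * M u k) * H t j k := by
          refine Finset.sum_congr rfl fun k _ => ?_
          rw [tprodM_apply, Finset.sum_mul]
          simp [hinv, hDh]
      _ = ∑ u, ∑ k, face (mode3 (ttrans A) M) Dh t j u * (c⁻¹ * M u k) * H t j k :=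
          Finset.sum_comm
      _ = ∑ u, c⁻¹ * (face (mode3 (ttrans A) M) Dh t j u * Hh t j u) := by
          refine Finset.sum_congr rfl fun u _ => ?_
          rw [hHh]
          show ∑ k, face (mode3 (ttrans A) M) Dh t j u * (c⁻¹ * M u k) * H t j k
              = c⁻¹ * (face (mode3 (ttrans A) M) Dh t j u * ∑ k, H t j k * M u k)
          rw [Finset.mul_sum, Finset.mul_sum]
          exact Finset.sum_congr rfl fun k _ => by ring
      _ = ∑ u, ∑ i, c⁻¹ * (Ah i t u * Dh i j u * Hh t j u) := by
          refine Finset.sum_congr rfl fun u _ => ?_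
          rw [face_apply, Finset.sum_mul, Finset.mul_sum]
          exact Finset.sum_congr rfl fun i _ => by rw [hAt]
  calc ∑ i, ∑ j, ∑ k, D i j k * tprodM M A H i j k
      = ∑ i, ∑ j, ∑ u, ∑ t, c⁻¹ * (Dh i j u * (Ah i t u * Hh t j u)) :=
        Finset.sum_congr rfl fun i _ => Finset.sum_congr rfl fun j _ => step1 i j
    _ = ∑ t, ∑ j, ∑ u, ∑ i, c⁻¹ * (Dh i j u * (Ah i t u * Hh t j u)) :=
        sum_comm4 _
    _ = ∑ t, ∑ j, ∑ u, ∑ i, c⁻¹ * (Ah i t u * Dh i j u * Hh t j u) := by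
        refine Finset.sum_congr rfl fun t _ => Finset.sum_congr rfl fun j _ =>
          Finset.sum_congr rfl fun u _ => Finset.sum_congr rfl fun i _ => by ring
    _ = ∑ t, ∑ j, ∑ k, tprodM M (ttrans A) D t j k * H t j k :=
        (Finset.sum_congr rfl fun t _ => Finset.sum_congr rfl fun j _ => (step2 t j).symm)

/-- evaluation at an entry as a CLM -/
def evalCLM (m q n : ℕ) (i : Fin m) (j : Fin q) (k : Fin n) :
    (Fin m → Fin q → Fin n → ℝ) →L[ℝ] ℝ :=
  (ContinuousLinearMap.proj (R := ℝ) (φ := fun _ : Fin n => ℝ) k).comp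
    ((ContinuousLinearMap.proj (R := ℝ) (φ := fun _ : Fin q => Fin n → ℝ) j).comp
      (ContinuousLinearMap.proj (R := ℝ) (φ := fun _ : Fin m => Fin q → Fin n → ℝ) i))

@[simp] lemma evalCLM_apply {m q n : ℕ} (i : Fin m) (j : Fin q) (k : Fin n)
    (X : Fin m → Fin q → Fin n → ℝ) : evalCLM m q n i j k X = X i j k := rfl

/-- pointwise scaling CLM -/
def scaleCLM {m q n : ℕ} (a : Fin m → Fin q → Fin n → ℝ) :
    (Fin m → Fin q → Fin n → ℝ) →L[ℝ] (Fin m → Fin q → Fin n → ℝ) :=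
  ContinuousLinearMap.pi fun i => ContinuousLinearMap.pi fun j =>
    ContinuousLinearMap.pi fun k => a i j k • evalCLM m q n i j k

@[simp] lemma scaleCLM_apply {m q n : ℕ} (a X : Fin m → Fin q → Fin n → ℝ)
    (i : Fin m) (j : Fin q) (k : Fin n) :
    scaleCLM a X i j k = a i j k * X i j k := rfl

/-- `U ↦ W *_M U` as a CLM -/
def tprodCLM {m p q n : ℕ} (M : Matrix (Fin n) (Fin n) ℝ)
    (W : Fin m → Fin p → Fin n → ℝ) :
    (Fin p → Fin q → Fin n → ℝ) →L[ℝ] (Fin m → Fin q → Fin n → ℝ) :=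
  LinearMap.toContinuousLinearMap
    { toFun := fun U => tprodM M W U
      map_add' := by
        intro U V
        funext i j k
        simp only [tprodM, mode3, face, Pi.add_apply, add_mul, mul_add,
          Finset.sum_add_distrib]
      map_smul' := by
        intro c U
        funext i j k
        simp only [tprodM, mode3, face, Pi.smul_apply, smul_eq_mul,
          RingHom.id_apply, Finset.mul_sum, Finset.sum_mul]
        refine Finset.sum_congr rfl fun _ _ => ?_
        refine Finset.sum_congr rfl fun _ _ => ?_
        refine Finset.sum_congr rfl fun _ _ => ?_
        refine Finset.sum_congr rfl fun _ _ => ?_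
        ring }

@[simp] lemma tprodCLM_apply {m p q n : ℕ} (M : Matrix (Fin n) (Fin n) ℝ)
    (W : Fin m → Fin p → Fin n → ℝ) (U : Fin p → Fin q → Fin n → ℝ) :
    tprodCLM (q := q) M W U = tprodM M W U := rfl

theorem layer_hasFDerivAt {m p q n : ℕ} (M : Matrix (Fin n) (Fin n) ℝ)
    (W : Fin m → Fin p → Fin n → ℝ) (Bb : Fin m → Fin n → ℝ)
    (σ σ' : ℝ → ℝ) (hσ : ∀ t, HasDerivAt σ (σ' t) t)
    (U : Fin p → Fin q → Fin n → ℝ) :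
    HasFDerivAt (fun U => (fun i j k => σ (tprodM M W U i j k + Bb i k) :
        Fin m → Fin q → Fin n → ℝ))
      ((scaleCLM (fun i j k => σ' (tprodM M W U i j k + Bb i k))).comp
        (tprodCLM M W)) U := by
  rw [hasFDerivAt_pi']
  intro i
  rw [hasFDerivAt_pi']
  intro j
  rw [hasFDerivAt_pi']
  intro k
  have h1 : HasFDerivAt (fun U => tprodM M W U i j k + Bb i k)
      ((evalCLM m q n i j k).comp (tprodCLM M W)) U := by
    simpa using (((evalCLM m q n i j k).comp (tprodCLM (q := q) M W)).hasFDerivAt (x := U)).add_const (Bb i k)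
  have h2 := (hσ (tprodM M W U i j k + Bb i k)).comp_hasFDerivAt U h1
  convert h2 using 1
  · rfl
  · rfl
  · ext x; simp [scaleCLM]

/-- Back-propagation through an affine layer followed by an entrywise activation:
for `Z = W *_M U + B·1ᵀ` and `U' = σ(Z)`, the gradient of the loss with respect to
`U` is `Wᵀ *_M (σ'(Z) ⊙ δU')`. -/
theorem mlp_input_gradient {m p q n : ℕ} (M : Matrix (Fin n) (Fin n) ℝ)
    (c : ℝ) (hc : c ≠ 0) (hM : M * Mᵀ = c • (1 : Matrix (Fin n) (Fin n) ℝ))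
    (W : Fin m → Fin p → Fin n → ℝ) (Bb : Fin m → Fin n → ℝ)
    (σ σ' : ℝ → ℝ) (hσ : ∀ t, HasDerivAt σ (σ' t) t)
    (E : (Fin m → Fin q → Fin n → ℝ) → ℝ)
    (G : (Fin m → Fin q → Fin n → ℝ) → (Fin m → Fin q → Fin n → ℝ))
    (hE : Differentiable ℝ E)
    (hG : ∀ X H, fderiv ℝ E X H = ∑ i, ∑ j, ∑ k, G X i j k * H i j k) :
    ∀ (U H : Fin p → Fin q → Fin n → ℝ),
      fderiv ℝ
        (fun U => E (fun i j k => σ (tprodM M W U i j k + Bb i k))) U H =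
        ∑ r, ∑ s, ∑ k,
          tprodM M (ttrans W)
            (fun i j k' =>
              σ' (tprodM M W U i j k' + Bb i k') *
                G (fun i j k'' => σ (tprodM M W U i j k'' + Bb i k'')) i j k') r s k
            * H r s k := by
  intro U H
  have hΦ := layer_hasFDerivAt M W Bb σ σ' hσ U
  have hcomp : HasFDerivAt
      (fun U => E (fun i j k => σ (tprodM M W U i j k + Bb i k)))
      ((fderiv ℝ E (fun i j k => σ (tprodM M W U i j k + Bb i k))).comp
        ((scaleCLM (fun i j k => σ' (tprodM M W U i j k + Bb i k))).comp
          (tprodCLM M W))) U :=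
    ((hE _).hasFDerivAt.comp U hΦ)
  rw [hcomp.fderiv]
  have lhs : (fderiv ℝ E (fun i j k => σ (tprodM M W U i j k + Bb i k)))
      (((scaleCLM (fun i j k => σ' (tprodM M W U i j k + Bb i k))).comp
        (tprodCLM M W)) H)
      = ∑ i, ∑ j, ∑ k,
          (fun i j k => σ' (tprodM M W U i j k + Bb i k) *
            G (fun i j k'' => σ (tprodM M W U i j k'' + Bb i k'')) i j k) i j k *
            tprodM M W H i j k := by
    rw [hG]
    refine Finset.sum_congr rfl fun i _ => Finset.sum_congr rfl fun j _ =>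
      Finset.sum_congr rfl fun k _ => ?_
    show G _ i j k * (σ' (tprodM M W U i j k + Bb i k) * tprodM M W H i j k) = _
    ring
  rw [ContinuousLinearMap.comp_apply, lhs]
  exact adjointEq M c hc hM W _ H
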